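/- arXiv:1504.07069 — 2 statements merged into one kernel-verified Lean document; each statement's English description precedes it below -/
import Mathlib

section
/- Let A be a Banach algebra over ℂ and let h ∈ A*. If the completion of the quotient normed space A / N_{r,h} (with N_{r,h} = {x ∈ A : h·x = 0} and norm induced by ‖x‖_{r,h} := ‖h·x‖) is reflexive, then h is weakly almost periodic: the set {h·a : a ∈ A, ‖a‖ ≤ 1} is relatively weakly compact in A*, i.e., its closure in the weak topology σ(A*, A**) is weakly compact. -/
/-- The right module action of `A` on its dual, `(h·x)(y) = h (x y)`, bundled as a
continuous linear map in `x`. -/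
noncomputable def rAct (A : Type*) [NormedRing A] [NormedAlgebra ℂ A]
    (h : A →L[ℂ] ℂ) : A →L[ℂ] (A →L[ℂ] ℂ) :=
  (ContinuousLinearMap.compL ℂ A A ℂ h).comp (ContinuousLinearMap.mul ℂ A)

/-- The identity map from a normed space to itself equipped with the weak topology
`σ(E, E*)` (the types are definitionally equal). -/
def toWeak {E : Type*} [NormedAddCommGroup E] [NormedSpace ℂ E] (x : E) :
    WeakSpace ℂ E := x

/-- A normed space `E` is reflexive when the canonical embedding into its double dual
is surjective. -/
def IsReflexiveSpace (E : Type*) [NormedAddCommGroup E] [NormedSpace ℂ E] : Prop :=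
  Function.Surjective (NormedSpace.inclusionInDoubleDual ℂ E)

section aux

variable {E : Type*} [NormedAddCommGroup E] [NormedSpace ℂ E]

/-- The weak topology on a normed space over `ℂ` is Hausdorff. -/
instance weakSpace_t2 : T2Space (WeakSpace ℂ E) := by
  constructor
  intro x y hxy
  have hxy' : (show E from x) ≠ (show E from y) := hxy
  obtain ⟨f, hf⟩ := SeparatingDual.exists_separating_of_ne (R := ℂ) hxy'
  exact separated_by_continuous (WeakBilin.eval_continuous _ f) hf

/-- In a reflexive space, closed balls are compact for the weak topology. -/
theorem isCompact_toWeak_closedBall [CompleteSpace E] (hrefl : IsReflexiveSpace E) (r : ℝ) :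
    IsCompact (toWeak '' (Metric.closedBall (0 : E) r)) := by
  set e : E ≃ₗᵢ[ℂ] StrongDual ℂ (StrongDual ℂ E) :=
    LinearIsometryEquiv.ofSurjective (NormedSpace.inclusionInDoubleDualLi ℂ (E := E)) hrefl with he
  have he_apply : ∀ (x : E) (f : StrongDual ℂ E), e x f = f x := by
    intro x f
    rw [he]
    rfl
  set g : WeakDual ℂ (StrongDual ℂ E) → WeakSpace ℂ E := fun φ => e.symm φ with hg
  have hgc : Continuous g := by
    apply WeakBilin.continuous_of_continuous_eval
    intro f
    have key : (fun φ : WeakDual ℂ (StrongDual ℂ E) =>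
        (topDualPairing ℂ E).flip (g φ) f) = fun φ => φ f := by
      funext φ
      have h1 : f (e.symm φ) = e (e.symm φ) f := (he_apply _ f).symm
      have h2 : e (e.symm φ) = φ := e.apply_symm_apply φ
      simpa [hg] using h1.trans (by rw [h2]; rfl)
    rw [key]
    exact WeakBilin.eval_continuous _ f
  have hK : IsCompact (g '' (WeakDual.toStrongDual ⁻¹' Metric.closedBall 0 r)) :=
    (WeakDual.isCompact_closedBall (𝕜 := ℂ) 0 r).image hgc
  have hset : toWeak '' (Metric.closedBall (0 : E) r)
      = g '' (WeakDual.toStrongDual ⁻¹' Metric.closedBall 0 r) := by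
    ext x
    constructor
    · rintro ⟨y, hy, rfl⟩
      rw [Metric.mem_closedBall, dist_zero_right] at hy
      refine ⟨e y, ?_, ?_⟩
      · exact ((mem_closedBall_zero_iff (a := e y) (r := r)).mpr ((e.norm_map y).trans_le hy) : _)
      · simp [hg, toWeak]
        rfl
    · rintro ⟨φ, hφ, rfl⟩
      simp only [Set.mem_preimage, Metric.mem_closedBall, dist_zero_right] at hφ
      refine ⟨e.symm φ, ?_, rfl⟩
      rw [Metric.mem_closedBall, dist_zero_right]
      exact (e.symm.norm_map (WeakDual.toStrongDual φ)).trans_le ((dist_zero_right (WeakDual.toStrongDual φ : StrongDual ℂ (StrongDual ℂ E))).symm.trans_le hφ)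
  rw [hset]
  exact hK

end aux

/-- Let `A` be a Banach algebra over `ℂ` and `h ∈ A*`.  If the
completion of the quotient normed space `A / N_{r,h}` (with `N_{r,h} = {x | h·x = 0}`
and norm induced by `‖x‖_{r,h} = ‖h·x‖`), realized isometrically via
`x + N_{r,h} ↦ h·x` as the closure of the range of `x ↦ h·x` in `A*`, is reflexive,
then `h` is weakly almost periodic: the orbit `{h·a : ‖a‖ ≤ 1}` is relatively compact
in the weak topology `σ(A*, A**)` of the Banach space `A*`. -/
theorem wap_of_reflexive_completion {A : Type*} [NormedRing A] [NormedAlgebra ℂ A]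
    [CompleteSpace A] (h : A →L[ℂ] ℂ)
    (hrefl : IsReflexiveSpace ↥((LinearMap.range (rAct A h : A →ₗ[ℂ] (A →L[ℂ] ℂ))).topologicalClosure)) :
    IsCompact (closure (toWeak '' (rAct A h '' {a : A | ‖a‖ ≤ 1}))) := by
  set F := (LinearMap.range (rAct A h : A →ₗ[ℂ] (A →L[ℂ] ℂ))).topologicalClosure with hF
  haveI : CompleteSpace F := (Submodule.isClosed_topologicalClosure _).completeSpace_coe
  have hcomp : IsCompact (toWeak '' (Metric.closedBall (0 : F) ‖rAct A h‖)) :=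
    isCompact_toWeak_closedBall hrefl ‖rAct A h‖
  have hKc : IsCompact ((WeakSpace.map F.subtypeL) ''
      (toWeak '' (Metric.closedBall (0 : F) ‖rAct A h‖))) :=
    hcomp.image (WeakSpace.map F.subtypeL).continuous
  have hsub : toWeak '' (rAct A h '' {a : A | ‖a‖ ≤ 1}) ⊆ (WeakSpace.map F.subtypeL) ''
      (toWeak '' (Metric.closedBall (0 : F) ‖rAct A h‖)) := by
    rintro _ ⟨_, ⟨a, ha, rfl⟩, rfl⟩
    have hmem : rAct A h a ∈ F :=
      Submodule.le_topologicalClosure _ (LinearMap.mem_range_self (rAct A h).toLinearMap a)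
    refine ⟨toWeak (⟨rAct A h a, hmem⟩ : F), ⟨⟨rAct A h a, hmem⟩, ?_, rfl⟩, rfl⟩
    have hb : ‖(⟨rAct A h a, hmem⟩ : F)‖ ≤ ‖rAct A h‖ := (rAct A h).unit_le_opNorm a ha
    exact (mem_closedBall_zero_iff (a := (⟨rAct A h a, hmem⟩ : F))).mpr hb
  exact hKc.of_isClosed_subset isClosed_closure (closure_minimal hsub hKc.isClosed)
end

section
/- Let A and B be Banach algebras over ℂ, let φ : A → B be a continuous surjective algebra homomorphism, and let h ∈ B*. If the completion of the quotient normed space B / {y ∈ B : h·y = 0} (with norm induced by y ↦ ‖h·y‖) is reflexive, then the completion of the quotient normed space A / {x ∈ A : (h∘φ)·x = 0} (with norm induced by x ↦ ‖(h∘φ)·x‖) is reflexive. -/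
lemma isReflexiveSpace_of_equiv {E F : Type*} [NormedAddCommGroup E] [NormedSpace ℂ E]
    [NormedAddCommGroup F] [NormedSpace ℂ F] (e : E ≃L[ℂ] F)
    (hF : IsReflexiveSpace F) : IsReflexiveSpace E := by
  intro Φ
  obtain ⟨y, hy⟩ := hF (Φ.comp ((ContinuousLinearMap.compL ℂ E F ℂ).flip (e : E →L[ℂ] F)))
  refine ⟨e.symm y, ?_⟩
  ext g
  have h1 : (g.comp (e.symm : F →L[ℂ] E)) y
      = Φ ((g.comp (e.symm : F →L[ℂ] E)).comp (e : E →L[ℂ] F)) := by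
    have := congrArg (fun Ψ => Ψ (g.comp (e.symm : F →L[ℂ] E))) hy
    simpa [NormedSpace.dual_def] using this
  have h2 : (g.comp (e.symm : F →L[ℂ] E)).comp (e : E →L[ℂ] F) = g := by
    ext x; simp
  rw [h2] at h1
  simpa [NormedSpace.dual_def] using h1


set_option maxHeartbeats 1000000 in
set_option synthInstance.maxHeartbeats 400000 in
/-- Let `A`, `B` be Banach algebras over `ℂ`, `φ : A → B` a
continuous surjective algebra homomorphism and `h ∈ B*`.  If the completion of the
quotient normed space `B / {y | h·y = 0}` (with norm induced by `y ↦ ‖h·y‖`, realized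
isometrically as the closure of the range of `y ↦ h·y` in `B*`) is reflexive, then so
is the completion of `A / {x | (h∘φ)·x = 0}` (with norm induced by
`x ↦ ‖(h∘φ)·x‖`, realized likewise inside `A*`). -/
theorem reflexive_completion_of_epimorphism {A B : Type*}
    [NormedRing A] [NormedAlgebra ℂ A] [CompleteSpace A]
    [NormedRing B] [NormedAlgebra ℂ B] [CompleteSpace B]
    (φ : A →L[ℂ] B) (hmul : ∀ x y : A, φ (x * y) = φ x * φ y)
    (hsurj : Function.Surjective φ) (h : B →L[ℂ] ℂ)
    (hrefl : IsReflexiveSpace ↥((LinearMap.range ((rAct B h : B →ₗ[ℂ] (B →L[ℂ] ℂ)))).topologicalClosure)) :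
    IsReflexiveSpace ↥((LinearMap.range ((rAct A (h.comp φ) : A →ₗ[ℂ] (A →L[ℂ] ℂ)))).topologicalClosure) := by
  classical
  -- the adjoint map T : B* → A*
  set T : (B →L[ℂ] ℂ) →L[ℂ] (A →L[ℂ] ℂ) := (ContinuousLinearMap.compL ℂ A B ℂ).flip φ with hT
  have hTapp : ∀ f : B →L[ℂ] ℂ, T f = f.comp φ := fun f => rfl
  -- key algebraic identity
  have key : ∀ x : A, rAct A (h.comp φ) x = T (rAct B h (φ x)) := by
    intro x
    ext y
    simp [rAct, hTapp, hmul]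
  -- antilipschitz constant for T
  obtain ⟨C, Cpos, hC⟩ := ContinuousLinearMap.exists_preimage_norm_le φ hsurj
  have hbound : ∀ f : B →L[ℂ] ℂ, ‖f‖ ≤ C * ‖T f‖ := by
    intro f
    refine ContinuousLinearMap.opNorm_le_bound f
      (mul_nonneg Cpos.le (norm_nonneg _)) (fun b => ?_)
    obtain ⟨a, ha, hna⟩ := hC b
    calc ‖f b‖ = ‖(T f) a‖ := by rw [hTapp]; simp [ha]
      _ ≤ ‖T f‖ * ‖a‖ := (T f).le_opNorm a
      _ ≤ ‖T f‖ * (C * ‖b‖) := mul_le_mul_of_nonneg_left hna (norm_nonneg (T f))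
      _ = C * ‖T f‖ * ‖b‖ := by ring
  have hanti : AntilipschitzWith (⟨C, Cpos.le⟩ : NNReal) T :=
    T.antilipschitz_of_bound (fun f => hbound f)
  -- submodules
  set R : Submodule ℂ (B →L[ℂ] ℂ) := LinearMap.range ((rAct B h : B →ₗ[ℂ] (B →L[ℂ] ℂ))) with hR
  set S : Submodule ℂ (B →L[ℂ] ℂ) := R.topologicalClosure with hS
  set R' : Submodule ℂ (A →L[ℂ] ℂ) := LinearMap.range ((rAct A (h.comp φ) : A →ₗ[ℂ] (A →L[ℂ] ℂ))) with hR'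
  -- range equality
  have hrange : Submodule.map (T : (B →L[ℂ] ℂ) →ₗ[ℂ] (A →L[ℂ] ℂ)) R = R' := by
    apply le_antisymm
    · rintro _ ⟨_, ⟨b, rfl⟩, rfl⟩
      obtain ⟨a, rfl⟩ := hsurj b
      exact ⟨a, key a⟩
    · rintro _ ⟨a, rfl⟩
      exact ⟨rAct B h (φ a), ⟨φ a, rfl⟩, (key a).symm⟩
  haveI : CompleteSpace S := R.isClosed_topologicalClosure.isComplete.completeSpace_coe
  -- T is a uniform inducing map
  have hui : IsUniformInducing ⇑T := hanti.isUniformInducing T.uniformContinuous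
  have hSc : IsComplete (S : Set (B →L[ℂ] ℂ)) := R.isClosed_topologicalClosure.isComplete
  have hTS_closed : IsClosed (⇑T '' (S : Set (B →L[ℂ] ℂ))) :=
    ((isComplete_image_iff hui).2 hSc).isClosed
  -- map of closure = closure of map
  have hmapS : Submodule.map (T : (B →L[ℂ] ℂ) →ₗ[ℂ] (A →L[ℂ] ℂ)) S = R'.topologicalClosure := by
    apply le_antisymm
    · rintro _ ⟨b, hb, rfl⟩
      have : T b ∈ closure (T '' (R : Set (B →L[ℂ] ℂ))) :=
        image_closure_subset_closure_image T.continuous ⟨b, hb, rfl⟩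
      have himg : T '' (R : Set (B →L[ℂ] ℂ)) = (R' : Set (A →L[ℂ] ℂ)) := by
        rw [← hrange]; rfl
      rw [himg] at this
      exact this
    · have hclosed : IsClosed ((Submodule.map (T : (B →L[ℂ] ℂ) →ₗ[ℂ] (A →L[ℂ] ℂ)) S : Submodule ℂ (A →L[ℂ] ℂ)) :
          Set (A →L[ℂ] ℂ)) := by
        rw [Submodule.map_coe]; exact hTS_closed
      have hsub : R' ≤ Submodule.map (T : (B →L[ℂ] ℂ) →ₗ[ℂ] (A →L[ℂ] ℂ)) S := by
        rw [← hrange]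
        exact Submodule.map_mono R.le_topologicalClosure
      exact Submodule.topologicalClosure_minimal R' hsub hclosed
  -- corestriction onto target
  set M : Submodule ℂ (A →L[ℂ] ℂ) := R'.topologicalClosure with hM
  haveI : CompleteSpace M := R'.isClosed_topologicalClosure.isComplete.completeSpace_coe
  have hmem : ∀ x : S, (T.comp S.subtypeL) x ∈ M := by
    intro x
    rw [← hmapS]
    exact ⟨x.1, x.2, rfl⟩
  set f : S →L[ℂ] M := (T.comp S.subtypeL).codRestrict M hmem with hf
  have hker : LinearMap.ker (f : S →ₗ[ℂ] M) = ⊥ := by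
    rw [Submodule.eq_bot_iff]
    intro x hx
    have h4 : T x.1 = 0 := congrArg Subtype.val (LinearMap.mem_ker.mp hx)
    have h5 : T x.1 = T 0 := by simpa using h4
    exact Subtype.ext (hanti.injective h5)
  have hrangef : LinearMap.range (f : S →ₗ[ℂ] M) = ⊤ := by
    rw [LinearMap.range_eq_top]
    rintro ⟨g, hg⟩
    rw [← hmapS] at hg
    obtain ⟨b, hb, rfl⟩ := hg
    exact ⟨⟨b, hb⟩, rfl⟩
  exact isReflexiveSpace_of_equiv (ContinuousLinearEquiv.ofBijective f hker hrangef).symm hrefl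
end
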